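/- For all 2×2 complex matrices A and B of SU(1,1) form, log ‖A·B‖ + log ‖A·B^{−*}‖ ≤ 2·log ‖A‖ + 2·log ‖B‖, where B^{−*} := (B^{−1})* is the conjugate transpose of the inverse of B. -/

import Mathlib

open Matrix

/-- A 2×2 complex matrix is of SU(1,1) form. -/
def SU11 (M : Matrix (Fin 2) (Fin 2) ℂ) : Prop :=
  ∃ a b : ℂ, M = !![a, b; (starRingEnd ℂ) b, (starRingEnd ℂ) a] ∧
    ‖a‖ ^ 2 - ‖b‖ ^ 2 = 1

/-- The Hilbert–Schmidt size `sqrt(|M₁₁|² + |M₁₂|²)` of a matrix of SU(1,1) form. -/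
noncomputable def hsNorm (M : Matrix (Fin 2) (Fin 2) ℂ) : ℝ :=
  Real.sqrt (‖M 0 0‖ ^ 2 + ‖M 0 1‖ ^ 2)

private lemma aux_real (u v s t p q p' q' : ℝ) (hv : 0 ≤ v) (ht : 0 ≤ t)
    (huv : u - v = 1) (hst : s - t = 1)
    (hp : 0 ≤ p) (hq : 0 ≤ q) (hp' : 0 ≤ p') (hq' : 0 ≤ q')
    (h1 : p - q = 1) (h2 : p' - q' = 1)
    (hsum : p + q + p' + q' = 2 * ((u + v) * (s + t))) :
    Real.log (Real.sqrt (p + q)) + Real.log (Real.sqrt (p' + q')) ≤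
      2 * Real.log (Real.sqrt (u + v)) + 2 * Real.log (Real.sqrt (s + t)) := by
  set N : ℝ := (u + v) * (s + t) with hN
  have hX : (1:ℝ) ≤ p + q := by linarith
  have hY : (1:ℝ) ≤ p' + q' := by linarith
  have huv1 : (1:ℝ) ≤ u + v := by linarith
  have hst1 : (1:ℝ) ≤ s + t := by linarith
  have hN1 : (1:ℝ) ≤ N := by nlinarith
  rw [Real.log_sqrt (by linarith), Real.log_sqrt (by linarith),
    Real.log_sqrt (by linarith), Real.log_sqrt (by linarith)]
  have hmul : (p + q) * (p' + q') ≤ N ^ 2 := by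
    nlinarith [sq_nonneg ((p + q) - (p' + q'))]
  have hlog := Real.log_le_log (by positivity) hmul
  rw [Real.log_mul (by linarith) (by linarith), Real.log_pow] at hlog
  have hNlog : Real.log N = Real.log (u + v) + Real.log (s + t) := by
    rw [hN, Real.log_mul (by linarith) (by linarith)]
  push_cast at hlog
  rw [hNlog] at hlog
  linarith

private lemma hs_explicit (w x y z : ℂ) :
    hsNorm !![w, x; y, z] = Real.sqrt (Complex.normSq w + Complex.normSq x) := by
  simp [hsNorm, Complex.sq_norm]

set_option maxHeartbeats 1000000 in
theorem swapping_hs_log (A B : Matrix (Fin 2) (Fin 2) ℂ)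
    (hA : SU11 A) (hB : SU11 B) :
    Real.log (hsNorm (A * B)) + Real.log (hsNorm (A * (B⁻¹)ᴴ)) ≤
      2 * Real.log (hsNorm A) + 2 * Real.log (hsNorm B) := by
  obtain ⟨a, b, hAeq, hab⟩ := hA
  obtain ⟨c, d, hBeq, hcd⟩ := hB
  have hab' : Complex.normSq a - Complex.normSq b = 1 := by
    rw [← Complex.sq_norm, ← Complex.sq_norm]; exact hab
  have hcd' : Complex.normSq c - Complex.normSq d = 1 := by
    rw [← Complex.sq_norm, ← Complex.sq_norm]; exact hcd
  -- inverse of B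
  have hBinv : B⁻¹ = !![(starRingEnd ℂ) c, -d; -((starRingEnd ℂ) d), c] := by
    apply Matrix.inv_eq_right_inv
    rw [hBeq, Matrix.mul_fin_two]
    have h2 : c * (starRingEnd ℂ) c - d * (starRingEnd ℂ) d = 1 := by
      rw [Complex.mul_conj, Complex.mul_conj]
      exact_mod_cast congrArg (Complex.ofReal) hcd'
    ext i j
    fin_cases i <;> fin_cases j <;> simp <;> ring_nf <;> linear_combination h2
  have hBH : (B⁻¹)ᴴ = !![c, -d; -((starRingEnd ℂ) d), (starRingEnd ℂ) c] := by
    rw [hBinv]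
    ext i j
    fin_cases i <;> fin_cases j <;> simp [Matrix.conjTranspose_apply]
  -- entries of the two products
  have hAB : A * B = !![a * c + b * (starRingEnd ℂ) d, a * d + b * (starRingEnd ℂ) c;
      (starRingEnd ℂ) b * c + (starRingEnd ℂ) a * (starRingEnd ℂ) d,
      (starRingEnd ℂ) b * d + (starRingEnd ℂ) a * (starRingEnd ℂ) c] := by
    rw [hAeq, hBeq, Matrix.mul_fin_two]
  have hABH : A * (B⁻¹)ᴴ = !![a * c + b * (-((starRingEnd ℂ) d)),
      a * (-d) + b * (starRingEnd ℂ) c;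
      (starRingEnd ℂ) b * c + (starRingEnd ℂ) a * (-((starRingEnd ℂ) d)),
      (starRingEnd ℂ) b * (-d) + (starRingEnd ℂ) a * (starRingEnd ℂ) c] := by
    rw [hAeq, hBH, Matrix.mul_fin_two]
  set u := Complex.normSq a
  set v := Complex.normSq b
  set s := Complex.normSq c
  set t := Complex.normSq d
  set p := Complex.normSq (a * c + b * (starRingEnd ℂ) d) with hp_def
  set q := Complex.normSq (a * d + b * (starRingEnd ℂ) c) with hq_def
  set p' := Complex.normSq (a * c - b * (starRingEnd ℂ) d) with hp'_def
  set q' := Complex.normSq (b * (starRingEnd ℂ) c - a * d) with hq'_def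
  have hsA : hsNorm A = Real.sqrt (u + v) := by
    rw [hAeq, hs_explicit]
  have hsB : hsNorm B = Real.sqrt (s + t) := by
    rw [hBeq, hs_explicit]
  have hsAB : hsNorm (A * B) = Real.sqrt (p + q) := by
    rw [hAB, hs_explicit, hp_def, hq_def]
  have hsABH : hsNorm (A * (B⁻¹)ᴴ) = Real.sqrt (p' + q') := by
    rw [hABH, hs_explicit,
      show a * c + b * (-((starRingEnd ℂ) d)) = a * c - b * (starRingEnd ℂ) d by ring,
      show a * (-d) + b * (starRingEnd ℂ) c = b * (starRingEnd ℂ) c - a * d by ring,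
      hp'_def, hq'_def]
  rw [hsA, hsB, hsAB, hsABH]
  -- the cross term
  set e : ℝ := (a * c * (starRingEnd ℂ) (b * (starRingEnd ℂ) d)).re with he_def
  have hcross : a * d * (starRingEnd ℂ) (b * (starRingEnd ℂ) c) =
      a * c * (starRingEnd ℂ) (b * (starRingEnd ℂ) d) := by
    simp only [_root_.map_mul, Complex.conj_conj]; ring
  have hcross' : (b * (starRingEnd ℂ) c * (starRingEnd ℂ) (a * d)).re = e := by
    rw [show b * (starRingEnd ℂ) c * (starRingEnd ℂ) (a * d) =
        (starRingEnd ℂ) (a * c * (starRingEnd ℂ) (b * (starRingEnd ℂ) d)) by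
      simp only [_root_.map_mul, Complex.conj_conj]; ring]
    exact Complex.conj_re _
  have hp_eq : p = u * s + v * t + 2 * e := by
    rw [hp_def, Complex.normSq_add, Complex.normSq_mul, Complex.normSq_mul,
      Complex.normSq_conj]
  have hq_eq : q = u * t + v * s + 2 * e := by
    rw [hq_def, Complex.normSq_add, Complex.normSq_mul, Complex.normSq_mul,
      Complex.normSq_conj, hcross]
  have hp'_eq : p' = u * s + v * t - 2 * e := by
    rw [hp'_def, Complex.normSq_sub, Complex.normSq_mul, Complex.normSq_mul,
      Complex.normSq_conj]
  have hq'_eq : q' = u * t + v * s - 2 * e := by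
    rw [hq'_def, Complex.normSq_sub, Complex.normSq_mul, Complex.normSq_mul,
      Complex.normSq_conj, hcross']
    ring
  apply aux_real u v s t p q p' q' (Complex.normSq_nonneg b) (Complex.normSq_nonneg d)
    hab' hcd' (Complex.normSq_nonneg _) (Complex.normSq_nonneg _)
    (Complex.normSq_nonneg _) (Complex.normSq_nonneg _)
  · rw [hp_eq, hq_eq]; linear_combination (s - t) * hab' + hcd'
  · rw [hp'_eq, hq'_eq]; linear_combination (s - t) * hab' + hcd'
  · rw [hp_eq, hq_eq, hp'_eq, hq'_eq]; ring
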